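/- For every n ≥ 1 and every ordinal α > 1, the function β ↦ ⟨α,β⟩_n is strictly increasing on the ordinals: for all ordinals β < γ, ⟨α,β⟩_n < ⟨α,γ⟩_n. -/

import Mathlib

open Ordinal

/-- The head of the Cantor Normal Form of `β` (for `β ≠ 0`): `ω ^ β₁`. -/
noncomputable def cnfHead (β : Ordinal) : Ordinal := ω ^ Ordinal.log ω β

/-- The tail of the Cantor Normal Form of `β`: `ω ^ β₂ + ⋯ + ω ^ β_k`. -/
noncomputable def cnfTail (β : Ordinal) : Ordinal := β - cnfHead β

theorem cnfHead_le {β : Ordinal} (hβ : β ≠ 0) : cnfHead β ≤ β :=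
  Ordinal.opow_log_le_self ω hβ

theorem cnfTail_lt {β : Ordinal} (hβ : β ≠ 0) : cnfTail β < β := by
  refine (Ordinal.sub_le_self β _).lt_of_ne fun h => ?_
  have h1 : cnfHead β + β = β := by
    have h2 := Ordinal.add_sub_cancel_of_le (cnfHead_le hβ)
    rwa [show β - cnfHead β = β from h] at h2
  have h2 : cnfHead β * ω ≤ β := Ordinal.add_eq_right_iff_mul_omega0_le.1 h1
  have h3 : β < ω ^ Order.succ (Ordinal.log ω β) :=
    Ordinal.lt_opow_succ_log_self Ordinal.one_lt_omega0 β
  rw [Ordinal.opow_succ] at h3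
  exact lt_irrefl β (h3.trans_le h2)

/-- Auxiliary step: given the previous operation `prev = ⟨-,-⟩_{n-1}` and the value `z`
at `β = 0`, produce `⟨α, -⟩_n` by transfinite recursion via the CNF of `β`. -/
noncomputable def ordOpAux (prev : Ordinal → Ordinal → Ordinal) (z : Ordinal)
    (α : Ordinal) : Ordinal → Ordinal :=
  WellFounded.fix Ordinal.lt_wf fun β IH =>
    if hβ0 : β = 0 then z                      -- k = 0
    else if β = 1 then α                       -- k = 1, β = 1
    else if hp : cnfHead β = β then            -- k = 1, β > 1 (additive principal limit)
      ⨆ γ : Set.Iio β, IH γ.1 γ.2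
    else                                       -- k ≥ 2
      prev (IH (cnfHead β) ((cnfHead_le hβ0).lt_of_ne hp))
           (IH (cnfTail β) (cnfTail_lt hβ0))

/-- The ordinal operations `⟨α, β⟩ₙ` of the paper (`n ≥ 1`; the value at `n = 0` is junk). -/
noncomputable def ordOp : ℕ → Ordinal → Ordinal → Ordinal
  | 0 => fun _ _ => 0
  | 1 => fun α β => α + β
  | 2 => fun α => ordOpAux (ordOp 1) 0 α
  | (n + 3) => fun α => ordOpAux (ordOp (n + 2)) 1 α

theorem ordOpAux_eq (prev : Ordinal → Ordinal → Ordinal) (z α β : Ordinal) :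
    ordOpAux prev z α β =
      if β = 0 then z
      else if β = 1 then α
      else if cnfHead β = β then ⨆ γ : Set.Iio β, ordOpAux prev z α γ.1
      else prev (ordOpAux prev z α (cnfHead β)) (ordOpAux prev z α (cnfTail β)) := by
  rw [ordOpAux, WellFounded.fix_eq]
  simp only [ordOpAux]
  split <;> rfl

theorem ordOpAux_zero (prev : Ordinal → Ordinal → Ordinal) (z α : Ordinal) :
    ordOpAux prev z α 0 = z := by
  rw [ordOpAux_eq]; simp

theorem ordOpAux_one (prev : Ordinal → Ordinal → Ordinal) (z α : Ordinal) :
    ordOpAux prev z α 1 = α := by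
  rw [ordOpAux_eq]; simp

universe u in
theorem ordOpAux_strictMono (prev : Ordinal.{u} → Ordinal.{u} → Ordinal.{u}) (z α : Ordinal.{u})
    (hα : 1 < α) (hz : z < α)
    (hgt : ∀ x y : Ordinal, 1 < x → 1 < y → x < prev x y)
    (hmono : ∀ x : Ordinal, 1 < x → ∀ y y' : Ordinal, y < y' → prev x y < prev x y') :
    ∀ γ β : Ordinal.{u}, β < γ → ordOpAux prev z α β < ordOpAux prev z α γ := by
  intro γ
  induction γ using Ordinal.induction with
  | h γ IH =>
  intro β hβγ
  set f : Ordinal → Ordinal := ordOpAux prev z α with hf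
  have hf1 : f 1 = α := ordOpAux_one prev z α
  have hfge : ∀ T : Ordinal, 1 ≤ T → T < γ → 1 < f T := by
    intro T h1 hTγ
    rcases eq_or_lt_of_le h1 with h | h
    · rw [← h, hf1]; exact hα
    · have := IH T hTγ 1 h
      rw [hf1] at this
      exact hα.trans this
  by_cases hγ0 : γ = 0
  · exact absurd hβγ (by simp [hγ0])
  by_cases hγ1 : γ = 1
  · subst hγ1
    have hβ0 : β = 0 := Ordinal.lt_one_iff_zero.1 hβγ
    rw [hβ0, hf, ordOpAux_zero, ordOpAux_one]
    exact hz
  have hγgt1 : 1 < γ := lt_of_le_of_ne (Ordinal.one_le_iff_ne_zero.2 hγ0) (Ne.symm hγ1)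
  by_cases hp : cnfHead γ = γ
  · -- additive principal limit case
    have hsucc : β + 1 < γ := by
      have h := Ordinal.principal_add_omega0_opow (Ordinal.log ω γ)
      rw [show (ω : Ordinal) ^ Ordinal.log ω γ = γ from hp] at h
      exact h hβγ hγgt1
    have h1 : f β < f (β + 1) := IH (β + 1) hsucc β (lt_add_one β)
    have h2 : f (β + 1) ≤ ⨆ γ' : Set.Iio γ, f γ'.1 :=
      Ordinal.le_iSup (fun γ' : Set.Iio γ => f γ'.1) ⟨β + 1, hsucc⟩
    calc f β < f (β + 1) := h1
      _ ≤ ⨆ γ' : Set.Iio γ, f γ'.1 := h2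
      _ = f γ := by rw [hf, ordOpAux_eq prev z α γ, if_neg hγ0, if_neg hγ1, if_pos hp]
  · -- k ≥ 2 case
    have hHle : cnfHead γ ≤ γ := cnfHead_le hγ0
    have hH : cnfHead γ < γ := hHle.lt_of_ne hp
    have hT : cnfTail γ < γ := cnfTail_lt hγ0
    have hH1 : 1 ≤ cnfHead γ :=
      Ordinal.one_le_iff_ne_zero.2 (Ordinal.opow_pos _ Ordinal.omega0_pos).ne'
    have hT1 : 1 ≤ cnfTail γ := by
      rw [Ordinal.one_le_iff_ne_zero]
      intro h0
      have hle : γ ≤ cnfHead γ := by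
        rw [← Ordinal.sub_eq_zero_iff_le]
        exact h0
      exact hp (hHle.antisymm hle)
    have hfH : 1 < f (cnfHead γ) := hfge _ hH1 hH
    have hfT : 1 < f (cnfTail γ) := hfge _ hT1 hT
    have hfγ : f γ = prev (f (cnfHead γ)) (f (cnfTail γ)) := by
      rw [hf, ordOpAux_eq prev z α γ, if_neg hγ0, if_neg hγ1, if_neg hp]
    rw [hfγ]
    rcases lt_trichotomy β (cnfHead γ) with h | h | h
    · exact (IH _ hH β h).trans (hgt _ _ hfH hfT)
    · rw [h]; exact hgt _ _ hfH hfT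
    · have hβ0 : β ≠ 0 := fun e => by simp [e] at h
      have hβ1 : β ≠ 1 := by
        intro e
        rw [e] at h
        exact absurd (hH1.trans_lt h) (lt_irrefl 1)
      have hlog : Ordinal.log ω β = Ordinal.log ω γ := by
        apply le_antisymm (Ordinal.log_mono_right ω hβγ.le)
        exact (Ordinal.opow_le_iff_le_log Ordinal.one_lt_omega0 hβ0).1 h.le
      have hheadβ : cnfHead β = cnfHead γ := by rw [cnfHead, cnfHead, hlog]
      have hheadne : cnfHead β ≠ β := by rw [hheadβ]; exact h.ne
      have e1 : cnfHead γ + cnfTail γ = γ := Ordinal.add_sub_cancel_of_le hHle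
      have e2 : cnfHead γ + cnfTail β = β := by
        rw [cnfTail, hheadβ]
        exact Ordinal.add_sub_cancel_of_le h.le
      have htail : cnfTail β < cnfTail γ := by
        rw [← e1, ← e2] at hβγ
        exact (add_lt_add_iff_left _).1 hβγ
      have hfβ : f β = prev (f (cnfHead γ)) (f (cnfTail β)) := by
        rw [hf, ordOpAux_eq prev z α β, if_neg hβ0, if_neg hβ1, if_neg hheadne, hheadβ]
      rw [hfβ]
      exact hmono _ hfH _ _ (IH _ hT _ htail)

theorem ordOp_succ_strictMono : ∀ n : ℕ, ∀ α : Ordinal, 1 < α →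
    ∀ β γ : Ordinal, β < γ → ordOp (n + 1) α β < ordOp (n + 1) α γ := by
  intro n
  induction n with
  | zero =>
    intro α hα β γ h
    show α + β < α + γ
    exact (add_lt_add_iff_left α).2 h
  | succ m IHm =>
    intro α hα
    have key : ∀ z : Ordinal, z < α → ∀ β γ : Ordinal, β < γ →
        ordOpAux (ordOp (m + 1)) z α β < ordOpAux (ordOp (m + 1)) z α γ := by
      intro z hz
      have hmono : ∀ x : Ordinal, 1 < x → ∀ y y' : Ordinal, y < y' →
          ordOp (m + 1) x y < ordOp (m + 1) x y' := fun x hx => IHm x hx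
      have hgt : ∀ x y : Ordinal, 1 < x → 1 < y → x < ordOp (m + 1) x y := by
        intro x y hx hy
        cases m with
        | zero =>
          show x < x + y
          exact lt_add_of_pos_right x (zero_lt_one.trans hy)
        | succ k =>
          have h1 : ordOp (k + 2) x 1 = x := by
            cases k with
            | zero => exact ordOpAux_one _ _ _
            | succ j => exact ordOpAux_one _ _ _
          conv_lhs => rw [← h1]
          exact IHm x hx 1 y hy
      exact fun β γ h => ordOpAux_strictMono (ordOp (m + 1)) z α hα hz hgt hmono γ β h
    cases m with
    | zero =>
      intro β γ h
      exact key 0 (zero_lt_one.trans hα) β γ h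
    | succ k =>
      intro β γ h
      exact key 1 hα β γ h

/-- For every `n ≥ 1` and every ordinal `α > 1`, the function `β ↦ ⟨α, β⟩ₙ` is
strictly increasing. -/
theorem ordOp_strictMono (n : ℕ) (hn : 1 ≤ n) (α : Ordinal) (hα : 1 < α) :
    ∀ β γ : Ordinal, β < γ → ordOp n α β < ordOp n α γ := by
  obtain ⟨m, rfl⟩ : ∃ m, n = m + 1 := ⟨n - 1, by omega⟩
  exact ordOp_succ_strictMono m α hα
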